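/- Let d be an odd prime, a, b ∈ ZMod d with b ≠ 0, and for λ ∈ ZMod d define v_λ ∈ ℂ^{ZMod d} by (v_λ)_j := d^{−1/2} ω^{Γ_{λ,j}} with Γ_{λ,j} := j b^{−1} λ − 2^{−1} (j b^{−1})(j b^{−1} − 1) a b ∈ ZMod d. Then W_{a,b} v_λ = ω^λ v_λ for every λ ∈ ZMod d, and the family (v_λ)_{λ ∈ ZMod d} is an orthonormal basis of ℂ^{ZMod d}. -/

import Mathlib

open Matrix Complex

noncomputable section

/-- ω = exp(2πi/d). -/
def omga (d : ℕ) : ℂ := Complex.exp (2 * Real.pi * Complex.I / d)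

/-- The Weyl operator W_{k,l}: (j,j') entry is ω^{jk} if j' = j + l, else 0. -/
def weyl (d : ℕ) (k l : ZMod d) : Matrix (ZMod d) (ZMod d) ℂ :=
  Matrix.of fun j j' => if j' = j + l then omga d ^ (j * k).val else 0

/-- Γ_{λ,j} = j b⁻¹ λ − 2⁻¹ (j b⁻¹)(j b⁻¹ − 1) a b. -/
def gam (d : ℕ) (a b lam j : ZMod d) : ZMod d :=
  j * b⁻¹ * lam - 2⁻¹ * (j * b⁻¹) * (j * b⁻¹ - 1) * (a * b)

/-- The eigenvector v_λ of W_{a,b}: (v_λ)_j = d^{−1/2} ω^{Γ_{λ,j}}. -/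
def vlam (d : ℕ) (a b lam : ZMod d) : ZMod d → ℂ :=
  fun j => (((Real.sqrt d)⁻¹ : ℝ) : ℂ) * omga d ^ (gam d a b lam j).val

lemma omga_pow_d (d : ℕ) [NeZero d] : omga d ^ d = 1 :=
  (Complex.isPrimitiveRoot_exp d (NeZero.ne d)).pow_eq_one

lemma omga_ne_zero (d : ℕ) : omga d ≠ 0 := Complex.exp_ne_zero _

lemma omga_pow_val_add (d : ℕ) [NeZero d] (m n : ZMod d) :
    omga d ^ (m + n).val = omga d ^ m.val * omga d ^ n.val := by
  have h1 : omga d ^ ((m.val + n.val) % d) = omga d ^ (m.val + n.val) := by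
    conv_rhs => rw [← Nat.div_add_mod (m.val + n.val) d]
    rw [pow_add, pow_mul, omga_pow_d, one_pow, one_mul]
  rw [ZMod.val_add, h1, pow_add]

lemma omga_abs (d : ℕ) : ‖omga d‖ = 1 := by
  have h : (2 * Real.pi * Complex.I / d) = ((2 * Real.pi / d : ℝ) : ℂ) * Complex.I := by
    push_cast; ring
  rw [omga, h, Complex.norm_exp_ofReal_mul_I]

lemma star_omga_pow_mul (d : ℕ) [NeZero d] (m n : ZMod d) :
    star (omga d ^ m.val) * omga d ^ n.val = omga d ^ (n - m).val := by
  have habs : ‖omga d ^ m.val‖ = 1 := by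
    rw [norm_pow, omga_abs, one_pow]
  have h : star (omga d ^ m.val) = (omga d ^ m.val)⁻¹ :=
    (Complex.inv_eq_conj habs).symm
  have key : omga d ^ (n - m).val * omga d ^ m.val = omga d ^ n.val := by
    rw [← omga_pow_val_add, sub_add_cancel]
  have hne : omga d ^ m.val ≠ 0 := pow_ne_zero _ (omga_ne_zero d)
  rw [h]
  field_simp
  linear_combination -key

lemma sum_omga (d : ℕ) [NeZero d] (hd : 1 < d) :
    ∑ m : ZMod d, omga d ^ m.val = 0 := by
  have hprim := Complex.isPrimitiveRoot_exp d (NeZero.ne d)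
  have hgeom := hprim.geom_sum_eq_zero hd
  rw [← hgeom]
  refine Finset.sum_nbij' (fun m => m.val) (fun i => (i : ZMod d)) ?_ ?_ ?_ ?_ ?_
  · intro m _; exact Finset.mem_range.mpr (ZMod.val_lt m)
  · intro i _; exact Finset.mem_univ _
  · intro m _; exact ZMod.natCast_zmod_val m
  · intro i hi; exact ZMod.val_natCast_of_lt (Finset.mem_range.mp hi)
  · intro m _; rfl

/-- for an odd prime d and b ≠ 0, the vectors v_λ satisfy
W_{a,b} v_λ = ω^λ v_λ and form an orthonormal basis of ℂ^{ZMod d}. -/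
theorem weyl_eigenbasis
    (d : ℕ) [NeZero d] (hd : d.Prime) (hodd : Odd d)
    (a b : ZMod d) (hb : b ≠ 0) :
    (∀ lam : ZMod d,
      (weyl d a b).mulVec (vlam d a b lam) = (omga d ^ lam.val) • vlam d a b lam) ∧
    (∀ lam mu : ZMod d,
      star (vlam d a b lam) ⬝ᵥ vlam d a b mu = if lam = mu then 1 else 0) ∧
    Submodule.span ℂ (Set.range (vlam d a b)) = ⊤ := by
  haveI := Fact.mk hd
  have hd1 : 1 < d := hd.one_lt
  have h2 : (2 : ZMod d) ≠ 0 := by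
    have h2' : ((2 : ℕ) : ZMod d) = 0 → d ∣ 2 := (ZMod.natCast_eq_zero_iff 2 d).mp
    intro h
    have hdvd : d ∣ 2 := h2' (by exact_mod_cast h)
    have : d = 2 := (Nat.prime_dvd_prime_iff_eq hd Nat.prime_two).mp hdvd
    rw [this] at hodd
    exact (Nat.not_odd_iff_even.mpr (by decide)) hodd
  -- the key ZMod identity
  have key : ∀ lam j : ZMod d,
      j * a + gam d a b lam (j + b) = lam + gam d a b lam j := by
    intro lam j
    simp only [gam]
    field_simp
    ring
  -- eigenvector property
  have heig : ∀ lam : ZMod d,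
      (weyl d a b).mulVec (vlam d a b lam) = (omga d ^ lam.val) • vlam d a b lam := by
    intro lam
    funext j
    have hsum : (weyl d a b).mulVec (vlam d a b lam) j
        = omga d ^ (j * a).val * vlam d a b lam (j + b) := by
      simp only [Matrix.mulVec, dotProduct, weyl, Matrix.of_apply, ite_mul, zero_mul]
      rw [Finset.sum_ite_eq' Finset.univ (j + b)
        (fun j' => omga d ^ (j * a).val * vlam d a b lam j')]
      simp
    rw [hsum]
    have hkey := congrArg (fun m : ZMod d => omga d ^ m.val) (key lam j)
    simp only [omga_pow_val_add] at hkey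
    simp only [vlam, Pi.smul_apply, smul_eq_mul]
    ring_nf
    ring_nf at hkey
    linear_combination (((Real.sqrt d)⁻¹ : ℝ) : ℂ) * hkey
  -- orthonormality
  have horth : ∀ lam mu : ZMod d,
      star (vlam d a b lam) ⬝ᵥ vlam d a b mu = if lam = mu then 1 else 0 := by
    intro lam mu
    have hterm : ∀ j : ZMod d,
        star (vlam d a b lam j) * vlam d a b mu j
          = (((Real.sqrt d)⁻¹ : ℝ) : ℂ) * ((Real.sqrt d)⁻¹ : ℝ)
            * omga d ^ (j * (b⁻¹ * (mu - lam))).val := by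
      intro j
      have hdiff : gam d a b mu j - gam d a b lam j = j * (b⁻¹ * (mu - lam)) := by
        simp only [gam]; ring
      have hstar := star_omga_pow_mul d (gam d a b lam j) (gam d a b mu j)
      rw [hdiff] at hstar
      simp only [vlam, star_mul', Complex.star_def, Complex.conj_ofReal]
      rw [← hstar]
      simp only [Complex.star_def]
      ring
    have hsum : star (vlam d a b lam) ⬝ᵥ vlam d a b mu
        = (((Real.sqrt d)⁻¹ : ℝ) : ℂ) * ((Real.sqrt d)⁻¹ : ℝ)
          * ∑ j : ZMod d, omga d ^ (j * (b⁻¹ * (mu - lam))).val := by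
      rw [dotProduct, Finset.mul_sum]
      exact Finset.sum_congr rfl fun j _ => hterm j
    have hcc : (((Real.sqrt d)⁻¹ : ℝ) : ℂ) * ((Real.sqrt d)⁻¹ : ℝ) = ((d : ℝ)⁻¹ : ℝ) := by
      rw [← Complex.ofReal_mul]
      congr 1
      rw [← mul_inv, Real.mul_self_sqrt (by positivity)]
    by_cases hlm : lam = mu
    · subst hlm
      simp only [sub_self, mul_zero, ZMod.val_zero, pow_zero] at hsum
      rw [hsum, hcc, if_pos rfl]
      simp only [Finset.sum_const, Finset.card_univ, ZMod.card, nsmul_eq_mul, mul_one]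
      have hd0 : (d : ℝ) ≠ 0 := Nat.cast_ne_zero.mpr (NeZero.ne d)
      push_cast
      field_simp
      exact div_self (by exact_mod_cast hd0)
    · rw [if_neg hlm, hsum]
      have hc' : b⁻¹ * (mu - lam) ≠ 0 := by
        apply mul_ne_zero (inv_ne_zero hb)
        exact sub_ne_zero.mpr (Ne.symm hlm)
      have hbij : Function.Bijective (fun j : ZMod d => j * (b⁻¹ * (mu - lam))) :=
        (Equiv.mulRight₀ _ hc').bijective
      have : ∑ j : ZMod d, omga d ^ (j * (b⁻¹ * (mu - lam))).val
          = ∑ m : ZMod d, omga d ^ m.val :=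
        Fintype.sum_bijective _ hbij _ _ (fun j => rfl)
      rw [this, sum_omga d hd1, mul_zero]
  refine ⟨heig, horth, ?_⟩
  -- span
  have hli : LinearIndependent ℂ (vlam d a b) := by
    rw [Fintype.linearIndependent_iff]
    intro g hg lam
    have h0 : star (vlam d a b lam) ⬝ᵥ (∑ i, g i • vlam d a b i) = g lam := by
      have expand : star (vlam d a b lam) ⬝ᵥ (∑ i, g i • vlam d a b i)
          = ∑ i, g i * (star (vlam d a b lam) ⬝ᵥ vlam d a b i) := by
        simp only [dotProduct, Pi.smul_apply, Finset.sum_apply, smul_eq_mul, Finset.mul_sum]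
        rw [Finset.sum_comm]
        exact Finset.sum_congr rfl fun i _ =>
          Finset.sum_congr rfl fun j _ => by ring
      rw [expand]
      simp only [horth, mul_ite, mul_one, mul_zero, Finset.sum_ite_eq, Finset.mem_univ,
        if_true]
    rw [hg] at h0
    simpa using h0.symm
  have hcard : Fintype.card (ZMod d) = Module.finrank ℂ (ZMod d → ℂ) := by
    rw [Module.finrank_fintype_fun_eq_card]
  exact LinearIndependent.span_eq_top_of_card_eq_finrank hli hcard

end
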